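/- Let K be an algebraically closed field with char K ≠ 2, and let H(K) := (SL₂(K) × SL₂(K))/N be the central product of two copies of SL₂(K), where N is the order-2 subgroup generated by (-I,-I). Then H(K) has exactly one central element of order 2 (the image of (-I, I)), and any two non-central elements of order 2 in H(K) are conjugate in H(K). In particular H(K) has exactly two conjugacy classes of involutions. -/
import Mathlib

open Matrix MatrixGroups

instance : Fact (Even (Fintype.card (Fin 2))) := ⟨⟨1, rfl⟩⟩

namespace CPaux

variable {K : Type*} [Field K]

lemma two_ne_zero_of_char (hchar : ringChar K ≠ 2) : (2 : K) ≠ 0 := by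
  intro h
  exact Ring.neg_one_ne_one_of_char_ne_two hchar (by linear_combination -h)

lemma neg1_corner : (!![(-1:K),0;0,-1]) = -1 := by
  ext i j; fin_cases i <;> fin_cases j <;> simp [Matrix.one_apply]

lemma sq_eq_one_mat (hchar : ringChar K ≠ 2) (M : Matrix (Fin 2) (Fin 2) K)
    (hdet : M.det = 1) (h : M * M = 1) : M = 1 ∨ M = -1 := by
  have h00 : (M*M) 0 0 = (1 : Matrix (Fin 2) (Fin 2) K) 0 0 := by rw [h]
  have h01 : (M*M) 0 1 = (1 : Matrix (Fin 2) (Fin 2) K) 0 1 := by rw [h]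
  have h10 : (M*M) 1 0 = (1 : Matrix (Fin 2) (Fin 2) K) 1 0 := by rw [h]
  simp [Matrix.mul_apply, Fin.sum_univ_two, Matrix.one_apply] at h00 h01 h10
  rw [Matrix.det_fin_two] at hdet
  by_cases htr : M 0 0 + M 1 1 = 0
  · exfalso
    exact two_ne_zero_of_char hchar (by linear_combination -h00 - hdet + M 0 0 * htr)
  · have hb : M 0 1 = 0 := by
      rcases mul_eq_zero.mp (show M 0 1 * (M 0 0 + M 1 1) = 0 by linear_combination h01) with h'|h'
      · exact h'
      · exact absurd h' htr
    have hc : M 1 0 = 0 := by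
      rcases mul_eq_zero.mp (show M 1 0 * (M 0 0 + M 1 1) = 0 by linear_combination h10) with h'|h'
      · exact h'
      · exact absurd h' htr
    have ha2 : M 0 0 * M 0 0 = 1 := by linear_combination h00 - M 1 0 * hb
    have had : M 0 0 * M 1 1 = 1 := by linear_combination hdet + M 1 0 * hb
    have hd : M 1 1 = M 0 0 := by
      linear_combination M 0 0 * had - M 1 1 * ha2
    rcases mul_self_eq_one_iff.mp ha2 with ha|ha
    · left
      rw [Matrix.eta_fin_two M, hb, hc, hd, ha, Matrix.one_fin_two]
    · right
      rw [Matrix.eta_fin_two M, hb, hc, hd, ha, neg1_corner]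

lemma trace_zero_of_sq_neg_one (M : Matrix (Fin 2) (Fin 2) K)
    (hdet : M.det = 1) (h : M * M = -1) : M 1 1 = - M 0 0 := by
  have h00 : (M*M) 0 0 = (-1 : Matrix (Fin 2) (Fin 2) K) 0 0 := by rw [h]
  have h01 : (M*M) 0 1 = (-1 : Matrix (Fin 2) (Fin 2) K) 0 1 := by rw [h]
  have h10 : (M*M) 1 0 = (-1 : Matrix (Fin 2) (Fin 2) K) 1 0 := by rw [h]
  simp [Matrix.mul_apply, Fin.sum_univ_two, Matrix.one_apply] at h00 h01 h10
  rw [Matrix.det_fin_two] at hdet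
  by_cases htr : M 0 0 + M 1 1 = 0
  · linear_combination htr
  · exfalso
    have hb : M 0 1 = 0 := by
      rcases mul_eq_zero.mp (show M 0 1 * (M 0 0 + M 1 1) = 0 by linear_combination h01) with h'|h'
      · exact h'
      · exact absurd h' htr
    have ha2 : M 0 0 * M 0 0 = -1 := by linear_combination h00 - M 1 0 * hb
    have had : M 0 0 * M 1 1 = 1 := by linear_combination hdet + M 1 0 * hb
    have ha0 : M 0 0 ≠ 0 := by
      intro h0; rw [h0] at ha2; simp at ha2
    exact ha0 (by
      have h5 : M 0 0 * (M 0 0 + M 1 1) = 0 := by linear_combination ha2 + had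
      rcases mul_eq_zero.mp h5 with h'|h'
      · exact h'
      · exact absurd h' htr)

lemma conj_to_D [IsAlgClosed K] (hchar : ringChar K ≠ 2) {i : K} (hi : i * i = -1)
    (M : Matrix (Fin 2) (Fin 2) K) (hdet : M.det = 1) (h : M * M = -1) :
    ∃ P : Matrix (Fin 2) (Fin 2) K, P.det = 1 ∧ M * P = P * !![i, 0; 0, -i] := by
  have hi0 : i ≠ 0 := by
    intro h0
    rw [h0, mul_zero] at hi
    exact one_ne_zero (α := K) (by linear_combination hi)
  have h2 : (2 : K) ≠ 0 := two_ne_zero_of_char hchar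
  have hd : M 1 1 = - M 0 0 := trace_zero_of_sq_neg_one M hdet h
  have h00 : (M*M) 0 0 = (-1 : Matrix (Fin 2) (Fin 2) K) 0 0 := by rw [h]
  simp [Matrix.mul_apply, Fin.sum_univ_two, Matrix.one_apply] at h00
  by_cases hc : M 1 0 ≠ 0
  · have ht0 : 2 * M 1 0 * i ≠ 0 := mul_ne_zero (mul_ne_zero h2 hc) hi0
    obtain ⟨s, hs⟩ := IsAlgClosed.exists_pow_nat_eq ((2 * M 1 0 * i)⁻¹) (n := 2) (by norm_num)
    have hs' : s * s * (2 * M 1 0 * i) = 1 := by rw [← sq, hs, inv_mul_cancel₀ ht0]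
    refine ⟨!![s*(M 0 0 + i), s*(M 0 0 - i); s*(M 1 0), s*(M 1 0)], ?_, ?_⟩
    · rw [Matrix.det_fin_two_of]; linear_combination hs'
    · ext x y
      fin_cases x <;> fin_cases y <;> simp [Matrix.mul_apply, Fin.sum_univ_two]
      · linear_combination s * h00 - s * hi
      · linear_combination s * h00 - s * hi
      · linear_combination s * M 1 0 * hd
      · linear_combination s * M 1 0 * hd
  · push_neg at hc
    have ha2 : M 0 0 * M 0 0 = -1 := by linear_combination h00 - M 0 1 * hc
    have hsplit : (M 0 0 - i) * (M 0 0 + i) = 0 := by linear_combination ha2 - hi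
    rcases mul_eq_zero.mp hsplit with ha | ha
    · have ha : M 0 0 = i := by linear_combination ha
      obtain ⟨s, hs⟩ := IsAlgClosed.exists_pow_nat_eq ((2*i)⁻¹) (n := 2) (by norm_num)
      have hs' : s * s * (2 * i) = 1 := by rw [← sq, hs, inv_mul_cancel₀ (mul_ne_zero h2 hi0)]
      refine ⟨!![s, -(s * M 0 1); 0, s*2*i], ?_, ?_⟩
      · rw [Matrix.det_fin_two_of]; linear_combination hs'
      · ext x y
        fin_cases x <;> fin_cases y <;> simp [Matrix.mul_apply, Fin.sum_univ_two]
        · linear_combination s * ha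
        · linear_combination (-(s * M 0 1)) * ha
        · exact Or.inl hc
        · linear_combination (-(s * M 0 1)) * hc + (2*s*i) * hd + (-(2*s*i)) * ha
    · have ha : M 0 0 = -i := by linear_combination ha
      obtain ⟨s, hs⟩ := IsAlgClosed.exists_pow_nat_eq ((-(2*i))⁻¹) (n := 2) (by norm_num)
      have hs' : s * s * (-(2 * i)) = 1 := by
        rw [← sq, hs, inv_mul_cancel₀ (neg_ne_zero.mpr (mul_ne_zero h2 hi0))]
      refine ⟨!![s * M 0 1, s; s*2*i, 0], ?_, ?_⟩
      · rw [Matrix.det_fin_two_of]; linear_combination hs'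
      · ext x y
        fin_cases x <;> fin_cases y <;> simp [Matrix.mul_apply, Fin.sum_univ_two]
        · linear_combination s * M 0 1 * ha
        · linear_combination s * ha
        · linear_combination s * M 0 1 * hc + (2*s*i) * hd + (-(2*s*i)) * ha
        · exact Or.inl hc

/-! SL(2) level lemmas -/

lemma neg_one_ne_one_SL (hchar : ringChar K ≠ 2) : (-1 : SL(2,K)) ≠ 1 := by
  intro hE
  have h1 : ((-1 : SL(2,K)) : Matrix (Fin 2) (Fin 2) K)
      = ((1 : SL(2,K)) : Matrix (Fin 2) (Fin 2) K) := by rw [hE]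
  rw [Matrix.SpecialLinearGroup.coe_neg, Matrix.SpecialLinearGroup.coe_one] at h1
  have h2 := congrFun (congrFun h1 0) 0
  simp [Matrix.one_apply] at h2
  exact Ring.neg_one_ne_one_of_char_ne_two hchar (by linear_combination h2)

lemma ne_neg_self_SL (hchar : ringChar K ≠ 2) (b : SL(2,K)) : b ≠ -b := by
  intro hE
  have h1 : (b : Matrix (Fin 2) (Fin 2) K) = -(b : Matrix (Fin 2) (Fin 2) K) := by
    conv_lhs => rw [hE]
    rw [Matrix.SpecialLinearGroup.coe_neg]
  have h2 : (2 : K) • (b : Matrix (Fin 2) (Fin 2) K) = 0 := by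
    rw [two_smul]
    nth_rewrite 1 [h1]
    simp
  rcases smul_eq_zero.mp h2 with h'|h'
  · exact two_ne_zero_of_char hchar h'
  · have := b.prop
    rw [h'] at this
    simp at this

lemma sl_sq_one (hchar : ringChar K ≠ 2) (a : SL(2,K)) (h : a * a = 1) :
    a = 1 ∨ a = -1 := by
  have hm : (a : Matrix (Fin 2) (Fin 2) K) * a = 1 := by
    rw [← Matrix.SpecialLinearGroup.coe_mul, h, Matrix.SpecialLinearGroup.coe_one]
  rcases sq_eq_one_mat hchar _ a.prop hm with h'|h'
  · left; exact Subtype.ext (by rw [h', Matrix.SpecialLinearGroup.coe_one])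
  · right
    exact Subtype.ext (by
      rw [Matrix.SpecialLinearGroup.coe_neg, Matrix.SpecialLinearGroup.coe_one, h'])

/-- constructor wrapper keeping the type `SL(2,K)` -/
def mkSL (M : Matrix (Fin 2) (Fin 2) K) (h : M.det = 1) : SL(2,K) := ⟨M, h⟩

@[simp] lemma mkSL_coe (M : Matrix (Fin 2) (Fin 2) K) (h : M.det = 1) :
    ((mkSL M h : SL(2,K)) : Matrix (Fin 2) (Fin 2) K) = M := rfl

lemma detD {i : K} (hi : i * i = -1) : (!![i, 0; 0, -i] : Matrix (Fin 2) (Fin 2) K).det = 1 := by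
  rw [Matrix.det_fin_two_of]; linear_combination -hi

lemma isConj_D [IsAlgClosed K] (hchar : ringChar K ≠ 2) {i : K} (hi : i * i = -1)
    (a : SL(2,K)) (ha : a * a = -1) :
    IsConj (mkSL !![i, 0; 0, -i] (detD hi)) a := by
  have ham : (a : Matrix (Fin 2) (Fin 2) K) * a = -1 := by
    rw [← Matrix.SpecialLinearGroup.coe_mul, ha, Matrix.SpecialLinearGroup.coe_neg,
      Matrix.SpecialLinearGroup.coe_one]
  obtain ⟨P, hP, hMP⟩ := conj_to_D hchar hi _ a.prop ham
  rw [isConj_iff]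
  refine ⟨mkSL P hP, ?_⟩
  have key : mkSL P hP * mkSL !![i, 0; 0, -i] (detD hi) = a * mkSL P hP :=
    Subtype.ext (by
      rw [Matrix.SpecialLinearGroup.coe_mul, Matrix.SpecialLinearGroup.coe_mul]
      exact hMP.symm)
  rw [key, mul_inv_cancel_right]

lemma exists_not_commute [IsAlgClosed K] (hchar : ringChar K ≠ 2) {i : K} (hi : i * i = -1)
    (a : SL(2,K)) (ha : a * a = -1) :
    ∃ g : SL(2,K), g * a ≠ a * g := by
  have h2 : (2 : K) ≠ 0 := two_ne_zero_of_char hchar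
  have hi0 : i ≠ 0 := by
    intro h0
    rw [h0, mul_zero] at hi
    exact one_ne_zero (α := K) (by linear_combination hi)
  obtain ⟨c, hc⟩ := isConj_iff.mp (isConj_D hchar hi a ha)
  set dD : SL(2,K) := mkSL !![i, 0; 0, -i] (detD hi) with hdD
  have hw : (!![0, 1; -1, 0] : Matrix (Fin 2) (Fin 2) K).det = 1 := by
    rw [Matrix.det_fin_two_of]; ring
  set w : SL(2,K) := mkSL !![0, 1; -1, 0] hw with hwdef
  refine ⟨c * w * c⁻¹, fun hEq => ?_⟩
  rw [← hc] at hEq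
  have h3 : c * (w * dD) * c⁻¹ = c * (dD * w) * c⁻¹ := by
    calc c * (w * dD) * c⁻¹ = c * w * c⁻¹ * (c * dD * c⁻¹) := by group
    _ = c * dD * c⁻¹ * (c * w * c⁻¹) := hEq
    _ = c * (dD * w) * c⁻¹ := by group
  have h4 : w * dD = dD * w := mul_left_cancel (mul_right_cancel h3)
  have h5 : (w : Matrix (Fin 2) (Fin 2) K) * dD = (dD : Matrix (Fin 2) (Fin 2) K) * w := by
    rw [← Matrix.SpecialLinearGroup.coe_mul, ← Matrix.SpecialLinearGroup.coe_mul, h4]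
  have h6 := congrFun (congrFun h5 0) 1
  simp [hwdef, hdD, mkSL, Matrix.mul_apply, Fin.sum_univ_two] at h6
  have h7 : (2 : K) * i = 0 := by linear_combination -h6
  rcases mul_eq_zero.mp h7 with h' | h'
  · exact h2 h'
  · exact hi0 h'

end CPaux

/-- The subgroup generated by `(-I, -I)` in `SL₂(K) × SL₂(K)` is central, hence normal. -/
instance negOneNegOne_zpowers_normal (K : Type*) [Field K] :
    (Subgroup.zpowers ((-1, -1) : SL(2, K) × SL(2, K))).Normal := by
  refine ⟨fun n hn g => ?_⟩
  obtain ⟨k, rfl⟩ := Subgroup.mem_zpowers_iff.mp hn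
  have hc : Commute ((-1, -1) : SL(2, K) × SL(2, K)) g :=
    Prod.ext (Commute.neg_one_left g.1) (Commute.neg_one_left g.2)
  have h := hc.zpow_left k
  have : g * ((-1, -1) : SL(2, K) × SL(2, K)) ^ k * g⁻¹ = ((-1, -1)) ^ k := by
    rw [← h.eq]; group
  rw [this]
  exact Subgroup.mem_zpowers_iff.mpr ⟨k, rfl⟩

namespace CPaux

variable {K : Type*} [Field K]

lemma mem_N_iff (g : SL(2,K) × SL(2,K)) :
    g ∈ Subgroup.zpowers ((-1, -1) : SL(2,K) × SL(2,K)) ↔ g = 1 ∨ g = (-1, -1) := by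
  have hsq : ((-1, -1) : SL(2,K) × SL(2,K)) ^ (2:ℤ) = 1 := by
    rw [zpow_two]
    exact Prod.ext (by simp) (by simp)
  constructor
  · intro hg
    obtain ⟨k, hk⟩ := Subgroup.mem_zpowers_iff.mp hg
    rcases Int.even_or_odd k with ⟨m, hm⟩ | ⟨m, hm⟩
    · left
      rw [← hk, show k = 2 * m by omega, _root_.zpow_mul, hsq, _root_.one_zpow]
    · right
      rw [← hk, show k = 2 * m + 1 by omega, _root_.zpow_add, _root_.zpow_mul, hsq, _root_.one_zpow,
        one_mul, zpow_one]
  · rintro (rfl | rfl)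
    · exact one_mem _
    · exact Subgroup.mem_zpowers _

lemma pi_eq_iff (x y : SL(2,K) × SL(2,K)) :
    QuotientGroup.mk' (Subgroup.zpowers ((-1, -1) : SL(2,K) × SL(2,K))) x
      = QuotientGroup.mk' (Subgroup.zpowers ((-1, -1) : SL(2,K) × SL(2,K))) y
    ↔ y = x ∨ y = x * (-1, -1) := by
  rw [QuotientGroup.mk'_eq_mk']
  constructor
  · rintro ⟨n, hn, rfl⟩
    rcases (mem_N_iff n).mp hn with rfl | rfl
    · left; rw [mul_one]
    · right; rfl
  · rintro (rfl | rfl)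
    · exact ⟨1, one_mem _, mul_one _⟩
    · exact ⟨(-1, -1), Subgroup.mem_zpowers _, rfl⟩

lemma pi_eq_one_iff (x : SL(2,K) × SL(2,K)) :
    QuotientGroup.mk' (Subgroup.zpowers ((-1, -1) : SL(2,K) × SL(2,K))) x = 1
    ↔ x = 1 ∨ x = (-1, -1) :=
  (QuotientGroup.eq_one_iff x).trans (mem_N_iff x)

end CPaux

namespace CPaux

variable {K : Type*} [Field K]

/-- The quotient map onto the central product. -/
abbrev Pi (K : Type*) [Field K] :
    (SL(2,K) × SL(2,K)) →*
      (SL(2,K) × SL(2,K)) ⧸ Subgroup.zpowers ((-1, -1) : SL(2,K) × SL(2,K)) :=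
  QuotientGroup.mk' (Subgroup.zpowers ((-1, -1) : SL(2,K) × SL(2,K)))

lemma pi_mem_center_of (x : SL(2,K) × SL(2,K)) (hx : ∀ g, g * x = x * g) :
    Pi K x ∈ Subgroup.center
      ((SL(2,K) × SL(2,K)) ⧸ Subgroup.zpowers ((-1, -1) : SL(2,K) × SL(2,K))) := by
  rw [Subgroup.mem_center_iff]
  intro h
  obtain ⟨g, rfl⟩ := QuotientGroup.mk'_surjective _ h
  rw [← _root_.map_mul, ← _root_.map_mul, hx]

lemma center_lift (hchar : ringChar K ≠ 2) (a b : SL(2,K))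
    (hc : Pi K (a, b) ∈ Subgroup.center
      ((SL(2,K) × SL(2,K)) ⧸ Subgroup.zpowers ((-1, -1) : SL(2,K) × SL(2,K)))) :
    ∀ g : SL(2,K), g * a = a * g := by
  intro g
  have h1 := Subgroup.mem_center_iff.mp hc (Pi K (g, 1))
  rw [← _root_.map_mul, ← _root_.map_mul, pi_eq_iff] at h1
  rcases h1 with h | h
  · have h' := congrArg Prod.fst h
    simpa using h'.symm
  · exfalso
    have hs := congrArg Prod.snd h
    simp at hs
    exact ne_neg_self_SL hchar b (by simpa using hs)

lemma lift_sq (hchar : ringChar K ≠ 2) (a b : SL(2,K)) (h2 : (Pi K (a, b)) ^ 2 = 1) :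
    (a * a = 1 ∧ b * b = 1) ∨ (a * a = -1 ∧ b * b = -1) := by
  rw [← map_pow, pi_eq_one_iff] at h2
  rcases h2 with h | h
  · left
    constructor
    · have h' := congrArg Prod.fst h; simpa [pow_two] using h'
    · have h' := congrArg Prod.snd h; simpa [pow_two] using h'
  · right
    constructor
    · have h' := congrArg Prod.fst h; simpa [pow_two] using h'
    · have h' := congrArg Prod.snd h; simpa [pow_two] using h'

lemma isConj_pair {a b c d : SL(2,K)} (h1 : IsConj a c) (h2 : IsConj b d) :
    IsConj ((a, b) : SL(2,K) × SL(2,K)) (c, d) := by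
  obtain ⟨u, hu⟩ := isConj_iff.mp h1
  obtain ⟨v, hv⟩ := isConj_iff.mp h2
  rw [isConj_iff]
  exact ⟨(u, v), Prod.ext (by simpa using hu) (by simpa using hv)⟩

end CPaux

/-- In the central product `H(K) = (SL₂(K) × SL₂(K))/⟨(-I,-I)⟩` over an
algebraically closed field of characteristic `≠ 2`, the image `z` of `(-I, I)` is the
unique central element of order 2, non-central elements of order 2 exist, and any two of
them are conjugate; so `H(K)` has exactly two conjugacy classes of involutions. -/
theorem central_product_involution_classes (K : Type*) [Field K] [IsAlgClosed K]
    (hchar : ringChar K ≠ 2) :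
    letI H := (SL(2, K) × SL(2, K)) ⧸ Subgroup.zpowers ((-1, -1) : SL(2, K) × SL(2, K))
    letI π : SL(2, K) × SL(2, K) →* H :=
      QuotientGroup.mk' (Subgroup.zpowers ((-1, -1) : SL(2, K) × SL(2, K)))
    letI z := π (-1, 1)
    (orderOf z = 2 ∧ z ∈ Subgroup.center H) ∧
    (∀ x : H, orderOf x = 2 → x ∈ Subgroup.center H → x = z) ∧
    (∃ x : H, orderOf x = 2 ∧ x ∉ Subgroup.center H) ∧
    (∀ x y : H, orderOf x = 2 → orderOf y = 2 →
      x ∉ Subgroup.center H → y ∉ Subgroup.center H → IsConj x y) := by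
  obtain ⟨i, hi2⟩ := IsAlgClosed.exists_pow_nat_eq (-1 : K) (n := 2) (by norm_num)
  have hi : i * i = -1 := by rw [← pow_two]; exact hi2
  have h2K : (2 : K) ≠ 0 := CPaux.two_ne_zero_of_char hchar
  have hne : (-1 : SL(2,K)) ≠ 1 := CPaux.neg_one_ne_one_SL hchar
  -- facts about z
  have hzsq : (CPaux.Pi K ((-1, 1))) ^ 2 = 1 := by
    rw [← map_pow, CPaux.pi_eq_one_iff]
    left
    exact Prod.ext (by simp) (by simp)
  have hz1 : CPaux.Pi K ((-1, 1)) ≠ 1 := by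
    intro h
    rw [CPaux.pi_eq_one_iff] at h
    rcases h with h | h
    · exact hne (congrArg Prod.fst h)
    · have h' : (1 : SL(2,K)) = -1 := congrArg Prod.snd h
      exact hne h'.symm
  have hzord : orderOf (CPaux.Pi K ((-1, 1))) = 2 := orderOf_eq_prime hzsq hz1
  have hzc : CPaux.Pi K ((-1, 1)) ∈ Subgroup.center _ :=
    CPaux.pi_mem_center_of _ (fun g =>
      Prod.ext ((Commute.neg_one_left g.1).symm.eq) (by simp))
  -- the diagonal element of order 4
  have hdd : CPaux.mkSL !![i, 0; 0, -i] (CPaux.detD hi)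
      * CPaux.mkSL !![i, 0; 0, -i] (CPaux.detD hi) = -1 := by
    apply Subtype.ext
    rw [Matrix.SpecialLinearGroup.coe_mul, Matrix.SpecialLinearGroup.coe_neg,
      Matrix.SpecialLinearGroup.coe_one, CPaux.mkSL_coe]
    ext x y
    fin_cases x <;> fin_cases y <;> simp [Matrix.mul_apply, Fin.sum_univ_two] <;>
      linear_combination hi
  -- uniqueness of the central involution
  have huniq : ∀ x : (SL(2, K) × SL(2, K)) ⧸ Subgroup.zpowers ((-1, -1) : SL(2, K) × SL(2, K)),
      orderOf x = 2 → x ∈ Subgroup.center _ → x = CPaux.Pi K ((-1, 1)) := by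
    intro x hx2 hxc
    obtain ⟨⟨a, b⟩, rfl⟩ := QuotientGroup.mk'_surjective _ x
    have hx1 := pow_orderOf_eq_one (CPaux.Pi K ((a, b)))
    rw [hx2] at hx1
    rcases CPaux.lift_sq hchar a b hx1 with ⟨ha, hb⟩ | ⟨ha, hb⟩
    · have hxne1 : CPaux.Pi K ((a, b)) ≠ 1 := by
        intro h; rw [h] at hx2; simp at hx2
      rcases CPaux.sl_sq_one hchar a ha with rfl | rfl <;>
        rcases CPaux.sl_sq_one hchar b hb with rfl | rfl
      · exact absurd ((CPaux.pi_eq_one_iff _).mpr (Or.inl rfl)) hxne1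
      · -- (1, -1) ↦ z
        rw [CPaux.pi_eq_iff]
        right
        exact Prod.ext (by simp) (by simp)
      · rfl
      · exact absurd ((CPaux.pi_eq_one_iff _).mpr (Or.inr rfl)) hxne1
    · exfalso
      obtain ⟨g, hg⟩ := CPaux.exists_not_commute hchar hi a ha
      exact hg (CPaux.center_lift hchar a b hxc g)
  -- existence of a non-central involution
  have hexist : ∃ x : (SL(2, K) × SL(2, K)) ⧸ Subgroup.zpowers ((-1, -1) : SL(2, K) × SL(2, K)),
      orderOf x = 2 ∧ x ∉ Subgroup.center _ := by
    set dD := CPaux.mkSL !![i, 0; 0, -i] (CPaux.detD hi) with hdD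
    have hD1 : dD ≠ 1 := by
      intro h
      have h0 := congrFun (congrFun (congrArg Subtype.val h) 0) 0
      simp [hdD, CPaux.mkSL, Matrix.one_apply] at h0
      rw [h0] at hi
      exact h2K (by linear_combination hi)
    have hDneg : dD ≠ -1 := by
      intro h
      have h0 := congrFun (congrFun (congrArg Subtype.val h) 0) 0
      simp [hdD, CPaux.mkSL, Matrix.SpecialLinearGroup.coe_neg, Matrix.one_apply] at h0
      rw [h0] at hi
      exact h2K (by linear_combination hi)
    refine ⟨CPaux.Pi K (dD, dD), ?_, ?_⟩
    · apply orderOf_eq_prime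
      · rw [← map_pow, CPaux.pi_eq_one_iff]
        right
        exact Prod.ext (by simp [pow_two, hdd]) (by simp [pow_two, hdd])
      · intro h
        rw [CPaux.pi_eq_one_iff] at h
        rcases h with h | h
        · exact hD1 (congrArg Prod.fst h)
        · exact hDneg (congrArg Prod.fst h)
    · intro hc
      obtain ⟨g, hg⟩ := CPaux.exists_not_commute hchar hi dD hdd
      exact hg (CPaux.center_lift hchar dD dD hc g)
  -- conjugacy of non-central involutions
  have hconj : ∀ x y : (SL(2, K) × SL(2, K)) ⧸ Subgroup.zpowers ((-1, -1) : SL(2, K) × SL(2, K)),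
      orderOf x = 2 → orderOf y = 2 → x ∉ Subgroup.center _ → y ∉ Subgroup.center _ →
      IsConj x y := by
    intro x y hx2 hy2 hxn hyn
    obtain ⟨⟨a, b⟩, rfl⟩ := QuotientGroup.mk'_surjective _ x
    obtain ⟨⟨c, d⟩, rfl⟩ := QuotientGroup.mk'_surjective _ y
    have hx1 := pow_orderOf_eq_one (CPaux.Pi K ((a, b)))
    rw [hx2] at hx1
    have hy1 := pow_orderOf_eq_one (CPaux.Pi K ((c, d)))
    rw [hy2] at hy1
    have hcase : ∀ u v : SL(2,K), u * u = 1 → v * v = 1 →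
        CPaux.Pi K (u, v) ∈ Subgroup.center
          ((SL(2, K) × SL(2, K)) ⧸ Subgroup.zpowers ((-1, -1) : SL(2, K) × SL(2, K))) := by
      intro u v hu hv
      apply CPaux.pi_mem_center_of
      have hu' : ∀ w : SL(2,K), w * u = u * w := by
        rcases CPaux.sl_sq_one hchar u hu with rfl | rfl
        · intro w; rw [mul_one, one_mul]
        · intro w; exact (Commute.neg_one_left w).symm.eq
      have hv' : ∀ w : SL(2,K), w * v = v * w := by
        rcases CPaux.sl_sq_one hchar v hv with rfl | rfl
        · intro w; rw [mul_one, one_mul]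
        · intro w; exact (Commute.neg_one_left w).symm.eq
      exact fun g => Prod.ext (hu' g.1) (hv' g.2)
    rcases CPaux.lift_sq hchar a b hx1 with ⟨ha, hb⟩ | ⟨ha, hb⟩
    · exact absurd (hcase a b ha hb) hxn
    rcases CPaux.lift_sq hchar c d hy1 with ⟨hc', hd'⟩ | ⟨hc', hd'⟩
    · exact absurd (hcase c d hc' hd') hyn
    have h1 := CPaux.isConj_D hchar hi a ha
    have h2 := CPaux.isConj_D hchar hi b hb
    have h3 := CPaux.isConj_D hchar hi c hc'
    have h4 := CPaux.isConj_D hchar hi d hd'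
    exact (CPaux.Pi K).map_isConj (CPaux.isConj_pair (h1.symm.trans h3) (h2.symm.trans h4))
  exact ⟨⟨hzord, hzc⟩, huniq, hexist, hconj⟩
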